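/- Let (X_i)_{i≥1} be i.i.d. real random variables with common probability density g, with g > 0 Lebesgue-almost everywhere, and let {f_m}_{m≥0} be probability densities on ℝ. Define the Shiryaev–Roberts-type statistic R_n = Σ_{k=1}^n Π_{i=k}^n ( f_{i-k}(X_i) / g(X_i) ). Then the process (R_n − n)_{n≥1} is a martingale with respect to the natural filtration of (X_i) under this i.i.d. measure; in particular E[R_n] = n for all n. -/

import Mathlib

open MeasureTheory ProbabilityTheory
open scoped NNReal ENNReal

/-- A real random variable `X` has probability density `f` (w.r.t. Lebesgue). -/
def HasDensity {Ω : Type*} [MeasurableSpace Ω] (X : Ω → ℝ) (P : Measure Ω)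
    (f : ℝ → ℝ) : Prop :=
  Measure.map X P = volume.withDensity (fun x => ENNReal.ofReal (f x))

section SR
variable {Ω : Type*} [MeasurableSpace Ω] {P : Measure Ω} [IsProbabilityMeasure P]

omit [IsProbabilityMeasure P] in
lemma sr_ratio_integral (X : Ω → ℝ) (hX : Measurable X) (fm g : ℝ → ℝ)
    (hfm : Measurable fm) (hg : Measurable g) (hg0 : ∀ x, 0 ≤ g x)
    (hfint : ∫ x, fm x = 1) (hgpos : ∀ᵐ x, 0 < g x)
    (hdens : Measure.map X P = volume.withDensity (fun x => ENNReal.ofReal (g x))) :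
    Integrable (fun ω => fm (X ω) / g (X ω)) P ∧ (∫ ω, fm (X ω) / g (X ω) ∂P) = 1 := by
  have hφ : Measurable (fun x => fm x / g x) := hfm.div hg
  have hgN : Measurable (fun x => (g x).toNNReal) := hg.real_toNNReal
  have hfmint : Integrable fm := by
    by_contra h
    rw [integral_undef h] at hfint; norm_num at hfint
  have hae : (fun x => ((g x).toNNReal : ℝ≥0) • (fm x / g x)) =ᵐ[volume] fm := by
    filter_upwards [hgpos] with x hx
    have : ((g x).toNNReal : ℝ) = g x := Real.coe_toNNReal _ (hg0 x)
    simp only [NNReal.smul_def, this, smul_eq_mul]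
    field_simp
  have hwd : volume.withDensity (fun x => ENNReal.ofReal (g x))
      = volume.withDensity (fun x => ((g x).toNNReal : ℝ≥0∞)) := rfl
  constructor
  · have : Integrable ((fun x => fm x / g x) ∘ X) P := by
      rw [← integrable_map_measure hφ.aestronglyMeasurable hX.aemeasurable, hdens, hwd,
        integrable_withDensity_iff_integrable_smul hgN]
      exact hfmint.congr hae.symm
    exact this
  · have h1 : ∫ ω, fm (X ω) / g (X ω) ∂P = ∫ x, fm x / g x ∂(Measure.map X P) :=
      (integral_map hX.aemeasurable hφ.aestronglyMeasurable).symm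
    rw [h1, hdens, hwd, integral_withDensity_eq_integral_smul hgN,
      integral_congr_ae hae, hfint]

lemma sr_prod_integral (Y : ℕ → Ω → ℝ)
    (hYindep : iIndepFun Y P)
    (hYm : ∀ j, Measurable (Y j)) (hYint : ∀ j, Integrable (Y j) P)
    (hYe : ∀ j, ∫ ω, Y j ω ∂P = 1) (s : Finset ℕ) :
    Integrable (fun ω => ∏ j ∈ s, Y j ω) P ∧ (∫ ω, ∏ j ∈ s, Y j ω ∂P) = 1 := by
  classical
  induction s using Finset.induction_on with
  | empty => simp
  | @insert i s hi ih =>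
    have hprod : IndepFun (∏ j ∈ s, Y j) (Y i) P :=
      hYindep.indepFun_finset_prod_of_notMem hYm hi
    have hps : (fun ω => ∏ j ∈ s, Y j ω) = ∏ j ∈ s, Y j := by
      funext ω; simp [Finset.prod_apply]
    have hint : Integrable ((∏ j ∈ s, Y j) * Y i) P :=
      hprod.integrable_mul (hps ▸ ih.1) (hYint i)
    have heq : (fun ω => ∏ j ∈ insert i s, Y j ω) = (∏ j ∈ s, Y j) * Y i := by
      funext ω; simp [Finset.prod_insert hi, Finset.prod_apply, mul_comm]
    constructor
    · rw [heq]; exact hint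
    · have := hprod.integral_mul_eq_mul_integral (hps ▸ ih.1).aestronglyMeasurable (hYint i).aestronglyMeasurable
      calc ∫ ω, ∏ j ∈ insert i s, Y j ω ∂P
          = ∫ ω, ((∏ j ∈ s, Y j) * Y i) ω ∂P := by rw [← heq]
        _ = (∫ ω, (∏ j ∈ s, Y j) ω ∂P) * ∫ ω, Y i ω ∂P := this
        _ = 1 := by rw [← hps, ih.2, hYe i, one_mul]

end SR

theorem shiryaev_roberts_martingale_aux
    {Ω : Type*} [MeasurableSpace Ω] (P : Measure Ω) [IsProbabilityMeasure P]
    (X : ℕ → Ω → ℝ) (f : ℕ → ℝ → ℝ) (g : ℝ → ℝ)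
    (hX_meas : ∀ j, Measurable (X j))
    (hf_meas : ∀ m, Measurable (f m)) (hg_meas : Measurable g)
    (hf_nonneg : ∀ m x, 0 ≤ f m x) (hg_nonneg : ∀ x, 0 ≤ g x)
    (hf_int : ∀ m, ∫ x, f m x = 1) (hg_int : ∫ x, g x = 1)
    (hg_pos : ∀ᵐ x, 0 < g x)
    (hindep : iIndepFun X P)
    (hdens : ∀ j : ℕ, Measure.map (X j) P = volume.withDensity (fun x => ENNReal.ofReal (g x))) :
    Martingale
      (fun n ω =>
        (∑ κ ∈ Finset.range (n + 1),
            ∏ j ∈ Finset.Icc κ n, f (j - κ) (X j ω) / g (X j ω))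
          - (n + 1 : ℝ))
      (Filtration.natural X fun j => (hX_meas j).stronglyMeasurable) P
    ∧
    ∀ n : ℕ,
      ∫ ω, (∑ κ ∈ Finset.range (n + 1),
          ∏ j ∈ Finset.Icc κ n, f (j - κ) (X j ω) / g (X j ω)) ∂P
        = (n + 1 : ℝ) := by
  classical
  set ℱ := Filtration.natural X fun j => (hX_meas j).stronglyMeasurable with hℱ
  -- single ratio facts
  have hZ : ∀ m j, Integrable (fun ω => f m (X j ω) / g (X j ω)) P ∧
      (∫ ω, f m (X j ω) / g (X j ω) ∂P) = 1 := fun m j =>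
    sr_ratio_integral (X j) (hX_meas j) (f m) g (hf_meas m) hg_meas hg_nonneg
      (hf_int m) hg_pos (hdens j)
  -- family used for products, for fixed κ
  have hY_indep : ∀ κ : ℕ, iIndepFun
      (fun j ω => f (j - κ) (X j ω) / g (X j ω)) P := fun κ =>
    hindep.comp (fun j x => f (j - κ) x / g x) (fun j => (hf_meas _).div hg_meas)
  -- product facts
  have hT : ∀ κ n : ℕ, Integrable
        (fun ω => ∏ j ∈ Finset.Icc κ n, f (j - κ) (X j ω) / g (X j ω)) P ∧
      (∫ ω, ∏ j ∈ Finset.Icc κ n, f (j - κ) (X j ω) / g (X j ω) ∂P) = 1 := fun κ n =>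
    sr_prod_integral _ (hY_indep κ)
      (fun j => ((hf_meas _).comp (hX_meas j)).div (hg_meas.comp (hX_meas j)))
      (fun j => (hZ _ j).1) (fun j => (hZ _ j).2) _
  -- integral claim
  have hInt : ∀ n : ℕ,
      ∫ ω, (∑ κ ∈ Finset.range (n + 1),
          ∏ j ∈ Finset.Icc κ n, f (j - κ) (X j ω) / g (X j ω)) ∂P = (n + 1 : ℝ) := by
    intro n
    rw [integral_finset_sum _ fun κ _ => (hT κ n).1,
      Finset.sum_congr rfl fun κ _ => (hT κ n).2]
    simp
  -- integrability of R n
  have hRint : ∀ n : ℕ, Integrable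
      (fun ω => ∑ κ ∈ Finset.range (n + 1),
        ∏ j ∈ Finset.Icc κ n, f (j - κ) (X j ω) / g (X j ω)) P := fun n =>
    integrable_finset_sum _ fun κ _ => (hT κ n).1
  -- measurability w.r.t. the filtration
  have hXF : ∀ {j n : ℕ}, j ≤ n → Measurable[ℱ n] (X j) := by
    intro j n hj
    have hle : MeasurableSpace.comap (X j) inferInstance ≤ ℱ n :=
      le_iSup₂ (f := fun k (_ : k ≤ n) => MeasurableSpace.comap (X k) inferInstance) j hj
    exact (comap_measurable (X j)).mono hle le_rfl
  have hTmeas : ∀ κ n : ℕ, Measurable[ℱ n]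
      (fun ω => ∏ j ∈ Finset.Icc κ n, f (j - κ) (X j ω) / g (X j ω)) := by
    intro κ n
    refine Finset.measurable_prod _ fun j hj => ?_
    have hjn : j ≤ n := (Finset.mem_Icc.mp hj).2
    exact ((hf_meas _).comp (hXF hjn)).div (hg_meas.comp (hXF hjn))
  have hRmeas : ∀ n : ℕ, Measurable[ℱ n]
      (fun ω => ∑ κ ∈ Finset.range (n + 1),
        ∏ j ∈ Finset.Icc κ n, f (j - κ) (X j ω) / g (X j ω)) := fun n =>
    Finset.measurable_sum _ fun κ _ => hTmeas κ n
  -- conditional expectation of a fresh ratio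
  have hcond : ∀ m i : ℕ,
      P[(fun ω => f m (X (i + 1) ω) / g (X (i + 1) ω)) | ℱ i] =ᵐ[P] fun _ => 1 := by
    intro m i
    have hsm : StronglyMeasurable[MeasurableSpace.comap (X (i + 1)) inferInstance]
        (fun ω => f m (X (i + 1) ω) / g (X (i + 1) ω)) :=
      (((hf_meas m).div hg_meas).comp
        (comap_measurable (X (i + 1)))).stronglyMeasurable
    have hind : Indep (MeasurableSpace.comap (X (i + 1)) inferInstance) (ℱ i) P :=
      hindep.indep_comap_natural_of_lt (fun j => (hX_meas j).stronglyMeasurable)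
        (Nat.lt_succ_self i)
    have := condExp_indep_eq (μ := P)
      (hX_meas (i + 1)).comap_le (ℱ.le i) hsm hind
    refine this.trans ?_
    rw [(hZ m (i + 1)).2]
  -- splitting the product over `Icc κ (i+1)`
  have hIcc : ∀ i κ : ℕ, κ ≤ i → ∀ ω,
      ∏ j ∈ Finset.Icc κ (i + 1), f (j - κ) (X j ω) / g (X j ω)
        = (∏ j ∈ Finset.Icc κ i, f (j - κ) (X j ω) / g (X j ω))
            * (f (i + 1 - κ) (X (i + 1) ω) / g (X (i + 1) ω)) := by
    intro i κ hκ ω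
    have hins : Finset.Icc κ (i + 1) = insert (i + 1) (Finset.Icc κ i) := by
      ext x; simp only [Finset.mem_Icc, Finset.mem_insert]; omega
    have hnm : (i + 1) ∉ Finset.Icc κ i := by simp
    rw [hins, Finset.prod_insert hnm, mul_comm]
  -- the one-step martingale property
  have hstep : ∀ i : ℕ,
      (fun ω => (∑ κ ∈ Finset.range (i + 1),
          ∏ j ∈ Finset.Icc κ i, f (j - κ) (X j ω) / g (X j ω)) - (i + 1 : ℝ))
        =ᵐ[P] P[(fun ω => (∑ κ ∈ Finset.range (i + 1 + 1),
          ∏ j ∈ Finset.Icc κ (i + 1), f (j - κ) (X j ω) / g (X j ω))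
            - ((i + 1 : ℕ) + 1 : ℝ)) | ℱ i] := by
    intro i
    set F : ℕ → Ω → ℝ := fun κ ω =>
      (∏ j ∈ Finset.Icc κ i, f (j - κ) (X j ω) / g (X j ω))
        * (f (i + 1 - κ) (X (i + 1) ω) / g (X (i + 1) ω)) with hF
    have hF_int : ∀ κ, κ ≤ i → Integrable (F κ) P := by
      intro κ hκ
      refine (hT κ (i + 1)).1.congr (Filter.EventuallyEq.of_eq ?_)
      funext ω; exact hIcc i κ hκ ω
    have hsplit : (fun ω => ∑ κ ∈ Finset.range (i + 1 + 1),
        ∏ j ∈ Finset.Icc κ (i + 1), f (j - κ) (X j ω) / g (X j ω))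
          = (∑ κ ∈ Finset.range (i + 1), F κ)
            + (fun ω => f 0 (X (i + 1) ω) / g (X (i + 1) ω)) := by
      funext ω
      rw [Finset.sum_range_succ]
      simp only [Pi.add_apply, Finset.sum_apply]
      congr 1
      · exact Finset.sum_congr rfl fun κ hκ =>
          hIcc i κ (Nat.lt_succ_iff.mp (Finset.mem_range.mp hκ)) ω
      · simp
    have hterm : ∀ κ ∈ Finset.range (i + 1),
        P[F κ | ℱ i] =ᵐ[P]
          fun ω => ∏ j ∈ Finset.Icc κ i, f (j - κ) (X j ω) / g (X j ω) := by
      intro κ hκ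
      have hκ' : κ ≤ i := Nat.lt_succ_iff.mp (Finset.mem_range.mp hκ)
      have h1 : P[F κ | ℱ i] =ᵐ[P]
          (fun ω => ∏ j ∈ Finset.Icc κ i, f (j - κ) (X j ω) / g (X j ω))
            * P[(fun ω => f (i + 1 - κ) (X (i + 1) ω) / g (X (i + 1) ω)) | ℱ i] :=
        condExp_mul_of_stronglyMeasurable_left (hTmeas κ i).stronglyMeasurable
          (hF_int κ hκ') (hZ (i + 1 - κ) (i + 1)).1
      refine h1.trans ?_
      filter_upwards [hcond (i + 1 - κ) i] with ω hω
      simp only [Pi.mul_apply, hω, mul_one]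
    have hsum_int : Integrable (∑ κ ∈ Finset.range (i + 1), F κ) P := by
      have : Integrable (fun ω => ∑ κ ∈ Finset.range (i + 1), F κ ω) P :=
        integrable_finset_sum _ fun κ hκ =>
          hF_int κ (Nat.lt_succ_iff.mp (Finset.mem_range.mp hκ))
      refine this.congr (Filter.EventuallyEq.of_eq ?_)
      funext ω; simp [Finset.sum_apply]
    have e1 : P[(fun ω => ∑ κ ∈ Finset.range (i + 1 + 1),
        ∏ j ∈ Finset.Icc κ (i + 1), f (j - κ) (X j ω) / g (X j ω)) | ℱ i]
          =ᵐ[P] fun ω => (∑ κ ∈ Finset.range (i + 1),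
            ∏ j ∈ Finset.Icc κ i, f (j - κ) (X j ω) / g (X j ω)) + 1 := by
      rw [hsplit]
      refine (condExp_add hsum_int (hZ 0 (i + 1)).1 (ℱ i)).trans ?_
      have e2 : P[∑ κ ∈ Finset.range (i + 1), F κ | ℱ i] =ᵐ[P]
          ∑ κ ∈ Finset.range (i + 1), P[F κ | ℱ i] :=
        condExp_finset_sum (fun κ hκ =>
          hF_int κ (Nat.lt_succ_iff.mp (Finset.mem_range.mp hκ))) (ℱ i)
      have hall : ∀ᵐ ω ∂P, ∀ κ ∈ Finset.range (i + 1),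
          condExp (ℱ i) P (F κ) ω
            = ∏ j ∈ Finset.Icc κ i, f (j - κ) (X j ω) / g (X j ω) :=
        (Filter.eventually_all_finset _).2 hterm
      filter_upwards [e2, hall, hcond 0 i] with ω h2 hω h0
      simp only [Pi.add_apply]
      rw [h2, h0]
      simp only [Finset.sum_apply]
      rw [Finset.sum_congr rfl hω]
    -- now subtract the constant
    have hsub := condExp_sub (μ := P) (m := ℱ i)
      (hRint (i + 1)) (integrable_const (((i + 1 : ℕ) + 1 : ℝ)))
    refine Filter.EventuallyEq.symm (hsub.trans ?_)
    have hc := condExp_const (μ := P) (ℱ.le i) (((i + 1 : ℕ) + 1 : ℝ))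
    filter_upwards [e1] with ω h1
    simp only [Pi.sub_apply, h1, hc]
    push_cast
    ring
  refine ⟨martingale_nat ?_ ?_ ?_, hInt⟩
  · intro n
    exact ((hRmeas n).sub measurable_const).stronglyMeasurable
  · intro n
    exact (hRint n).sub (integrable_const _)
  · intro i
    exact hstep i



/-- **The Shiryaev–Roberts-type statistic minus `n` is a martingale.** -/
theorem shiryaev_roberts_martingale
    {Ω : Type*} [MeasurableSpace Ω] (P : Measure Ω) [IsProbabilityMeasure P]
    (X : ℕ → Ω → ℝ) (f : ℕ → ℝ → ℝ) (g : ℝ → ℝ)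
    (hX_meas : ∀ j, Measurable (X j))
    (hf_meas : ∀ m, Measurable (f m)) (hg_meas : Measurable g)
    (hf_nonneg : ∀ m x, 0 ≤ f m x) (hg_nonneg : ∀ x, 0 ≤ g x)
    (hf_int : ∀ m, ∫ x, f m x = 1) (hg_int : ∫ x, g x = 1)
    (hg_pos : ∀ᵐ x, 0 < g x)
    (hindep : iIndepFun X P)
    (hdens : ∀ j : ℕ, HasDensity (X j) P g) :
    Martingale
      (fun n ω =>
        (∑ κ ∈ Finset.range (n + 1),
            ∏ j ∈ Finset.Icc κ n, f (j - κ) (X j ω) / g (X j ω))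
          - (n + 1 : ℝ))
      (Filtration.natural X fun j => (hX_meas j).stronglyMeasurable) P
    ∧
    ∀ n : ℕ,
      ∫ ω, (∑ κ ∈ Finset.range (n + 1),
          ∏ j ∈ Finset.Icc κ n, f (j - κ) (X j ω) / g (X j ω)) ∂P
        = (n + 1 : ℝ) :=
  shiryaev_roberts_martingale_aux P X f g hX_meas hf_meas hg_meas hf_nonneg hg_nonneg
    hf_int hg_int hg_pos hindep (fun j => hdens j)
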